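/- In an ω-complete cancellable Σ-monoid in which the partial order is ω-complete and sums are suprema of finite partial sums (such as hom-sets of the form Hom(M, I) in the classical model), the countable sum Σ_{i∈I} x_i is defined if and only if the set of finite partial sums {Σ_{i∈I'} x_i : I' ⊆_fin I} is bounded above, and in that case Σ_{i∈I} x_i equals the least upper bound of the finite partial sums. -/

import Mathlib

open scoped NNReal

lemma aux_summable {x : ℕ → ℝ≥0} (h : ∀ s : Finset ℕ, ∑ i ∈ s, x i ≤ 1) :
    Summable x :=
  NNReal.summable_of_sum_range_le (c := 1) (fun n => h (Finset.range n))

/-- In the ω-complete cancellable Σ-monoid of `[0,1]`-valued functions with pointwise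
sum (such as hom-sets `Hom(M, I)` in the classical model), a countable sum is defined
iff the finite partial sums are bounded above (i.e. all are ≤ 1, pointwise), and in
that case the sum equals the least upper bound of the finite partial sums. -/
theorem sum_defined_iff_bounded_and_eq_lub {A : Type}
    (x : ℕ → A → ℝ≥0) (hx : ∀ i a, x i a ≤ 1) :
    (((∀ a, Summable fun i => x i a) ∧ ∀ a, (∑' i, x i a) ≤ 1) ↔
      (∀ (s : Finset ℕ) (a : A), ∑ i ∈ s, x i a ≤ 1)) ∧
    ((∀ (s : Finset ℕ) (a : A), ∑ i ∈ s, x i a ≤ 1) →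
      ∀ a, (∑' i, x i a) = ⨆ s : Finset ℕ, ∑ i ∈ s, x i a) := by
  constructor
  · constructor
    · rintro ⟨hsum, hle⟩ s a
      exact le_trans (Summable.sum_le_tsum s (fun i _ => zero_le) (hsum a)) (hle a)
    · intro h
      have hs : ∀ a, Summable fun i => x i a := fun a => aux_summable (fun s => h s a)
      exact ⟨hs, fun a => Summable.tsum_le_of_sum_le (hs a) (fun s => h s a)⟩
  · intro h a
    have hs : Summable fun i => x i a := aux_summable (fun s => h s a)
    have := isLUB_hasSum' hs.hasSum
    exact (this.ciSup_eq).symm
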